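/- Let n ≥ 4 and let (x₁,y₁),…,(x_n,y_n) be independent identically distributed pairs of real-valued random variables with E[x₁²] < ∞ and E[y₁²] < ∞. Then the fourth-order U-statistic cov_n² is an unbiased estimator of the squared covariance: E[cov_n²((x₁,…,x_n),(y₁,…,y_n))] = Cov(x₁,y₁)². -/

import Mathlib

open Finset MeasureTheory ProbabilityTheory

lemma sqIntegrable_mul {Ω : Type*} [MeasurableSpace Ω] {μ : Measure Ω} {f g : Ω → ℝ}
    (hf : MemLp f 2 μ) (hg : MemLp g 2 μ) : Integrable (fun ω => f ω * g ω) μ := by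
  have h : MemLp (f • g) 1 μ :=
    haveI : ENNReal.HolderTriple 2 2 1 := ⟨by simp [ENNReal.inv_two_add_inv_two]⟩
    MemLp.smul (r := 1) hg hf
  exact memLp_one_iff_integrable.mp (by simpa [smul_eq_mul, Pi.mul_def] using h)

lemma strictMono_vec4 {n : ℕ} {s t u v : Fin n} (h1 : s < t) (h2 : t < u) (h3 : u < v) :
    StrictMono ![s, t, u, v] := by
  rw [Fin.strictMono_iff_lt_succ]
  intro i
  fin_cases i <;> simpa using by assumption

lemma card_four {α : Type*} [DecidableEq α] {a b c d : α}
    (hab : a ≠ b) (hac : a ≠ c) (had : a ≠ d) (hbc : b ≠ c) (hbd : b ≠ d) (hcd : c ≠ d) :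
    ({a, b, c, d} : Finset α).card = 4 := by
  rw [Finset.card_insert_of_notMem (by simp [hab, hac, had]),
    Finset.card_insert_of_notMem (by simp [hbc, hbd]),
    Finset.card_insert_of_notMem (by simp [hcd]), Finset.card_singleton]

lemma card_quad (n : ℕ) :
    ((univ : Finset (Fin n × Fin n × Fin n × Fin n)).filter
      (fun q => q.1 < q.2.1 ∧ q.2.1 < q.2.2.1 ∧ q.2.2.1 < q.2.2.2)).card = n.choose 4 := by
  have key : ((univ : Finset (Fin n × Fin n × Fin n × Fin n)).filter
      (fun q => q.1 < q.2.1 ∧ q.2.1 < q.2.2.1 ∧ q.2.2.1 < q.2.2.2)).card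
      = (Finset.powersetCard 4 (univ : Finset (Fin n))).card := by
    apply Finset.card_bij (fun q _ => ({q.1, q.2.1, q.2.2.1, q.2.2.2} : Finset (Fin n)))
    · rintro ⟨s, t, u, v⟩ hq
      simp only [Finset.mem_filter] at hq
      obtain ⟨-, h1, h2, h3⟩ := hq
      rw [Finset.mem_powersetCard]
      refine ⟨Finset.subset_univ _, ?_⟩
      exact card_four h1.ne (h1.trans h2).ne ((h1.trans h2).trans h3).ne h2.ne
        (h2.trans h3).ne h3.ne
    · rintro ⟨s, t, u, v⟩ hq ⟨s', t', u', v'⟩ hq' heq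
      simp only [Finset.mem_filter] at hq hq'
      obtain ⟨-, h1, h2, h3⟩ := hq
      obtain ⟨-, h1', h2', h3'⟩ := hq'
      have hc : ({s, t, u, v} : Finset (Fin n)).card = 4 :=
        card_four h1.ne (h1.trans h2).ne ((h1.trans h2).trans h3).ne h2.ne
          (h2.trans h3).ne h3.ne
      have e1 : ![s, t, u, v] = ({s, t, u, v} : Finset (Fin n)).orderEmbOfFin hc :=
        Finset.orderEmbOfFin_unique hc
          (by intro i; fin_cases i <;> simp) (strictMono_vec4 h1 h2 h3)
      have e2 : ![s', t', u', v'] = ({s, t, u, v} : Finset (Fin n)).orderEmbOfFin hc :=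
        Finset.orderEmbOfFin_unique hc
          (by intro i; rw [heq]; fin_cases i <;> simp) (strictMono_vec4 h1' h2' h3')
      have e3 : ![s, t, u, v] = ![s', t', u', v'] := by rw [e1, e2]
      have es := congrFun e3 0
      have et := congrFun e3 1
      have eu := congrFun e3 2
      have ev := congrFun e3 3
      simp at es et eu ev
      simp_all
    · intro S hS
      rw [Finset.mem_powersetCard] at hS
      obtain ⟨-, hc⟩ := hS
      set g := S.orderEmbOfFin hc with hg
      refine ⟨(g 0, g 1, g 2, g 3), ?_, ?_⟩
      · simp only [Finset.mem_filter]
        exact ⟨Finset.mem_univ _, (S.orderEmbOfFin hc).strictMono (by decide),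
          (S.orderEmbOfFin hc).strictMono (by decide),
          (S.orderEmbOfFin hc).strictMono (by decide)⟩
      · have hsub : ({g 0, g 1, g 2, g 3} : Finset (Fin n)) ⊆ S := by
          intro z hz
          simp only [Finset.mem_insert, Finset.mem_singleton] at hz
          rcases hz with h | h | h | h <;> (rw [h]; exact Finset.orderEmbOfFin_mem S hc _)
        have hinj := (S.orderEmbOfFin hc).injective
        have hc4 : ({g 0, g 1, g 2, g 3} : Finset (Fin n)).card = 4 :=
          card_four (hinj.ne (by decide)) (hinj.ne (by decide)) (hinj.ne (by decide))
            (hinj.ne (by decide)) (hinj.ne (by decide)) (hinj.ne (by decide))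
        exact Finset.eq_of_subset_of_card_le hsub (by rw [hc, hc4])
  rw [key, Finset.card_powersetCard, Finset.card_univ, Fintype.card_fin]

/-- The symmetrized kernel `h` of the fourth-order `𝒰`-statistic `cov_n²`: the average over
all `4!` permutations `(s′,t′,u′,v′)` of `(s,t,u,v)` of
`(1/4)·(x_{s′}−x_{t′})(y_{s′}−y_{t′})(x_{u′}−x_{v′})(y_{u′}−y_{v′})`. -/
noncomputable def hKernel {n : ℕ} (x y : Fin n → ℝ) (s t u v : Fin n) : ℝ :=
  (1 / (Nat.factorial 4 : ℝ)) * ∑ σ : Equiv.Perm (Fin 4),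
    (1 / 4 : ℝ) * (x (![s, t, u, v] (σ 0)) - x (![s, t, u, v] (σ 1)))
      * (y (![s, t, u, v] (σ 0)) - y (![s, t, u, v] (σ 1)))
      * (x (![s, t, u, v] (σ 2)) - x (![s, t, u, v] (σ 3)))
      * (y (![s, t, u, v] (σ 2)) - y (![s, t, u, v] (σ 3)))

/-- The fourth-order `𝒰`-statistic `cov_n²(x,y) = (1/C(n,4))·Σ_{s<t<u<v} h(s,t,u,v)`. -/
noncomputable def covnSq {n : ℕ} (x y : Fin n → ℝ) : ℝ :=
  (∑ s, ∑ t, ∑ u, ∑ v,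
    if s < t ∧ t < u ∧ u < v then hKernel x y s t u v else 0) / (n.choose 4 : ℝ)

/-- For `n ≥ 4` and i.i.d. pairs `(x_s, y_s)` of square-integrable real
random variables, the fourth-order `𝒰`-statistic `cov_n²` is an unbiased estimator of the
squared covariance: `E[cov_n²] = Cov(x₁,y₁)²`. -/
theorem integral_covnSq_eq_cov_sq
    {Ω : Type*} [MeasurableSpace Ω] (μ : Measure Ω) [IsProbabilityMeasure μ]
    (n : ℕ) (hn : 4 ≤ n) (x y : Fin n → Ω → ℝ)
    (hmeas : ∀ s, Measurable (fun ω => (x s ω, y s ω)))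
    (hindep : iIndepFun (m := fun _ : Fin n => (inferInstance : MeasurableSpace (ℝ × ℝ)))
      (fun s ω => (x s ω, y s ω)) μ)
    (hident : ∀ s, Measure.map (fun ω => (x s ω, y s ω)) μ =
      Measure.map (fun ω => (x ⟨0, by omega⟩ ω, y ⟨0, by omega⟩ ω)) μ)
    (hx2 : Integrable (fun ω => (x ⟨0, by omega⟩ ω) ^ 2) μ)
    (hy2 : Integrable (fun ω => (y ⟨0, by omega⟩ ω) ^ 2) μ) :
    ∫ ω, covnSq (fun s => x s ω) (fun s => y s ω) ∂μ =
      (∫ ω, x ⟨0, by omega⟩ ω * y ⟨0, by omega⟩ ω ∂μ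
        - (∫ ω, x ⟨0, by omega⟩ ω ∂μ) * ∫ ω, y ⟨0, by omega⟩ ω ∂μ) ^ 2 := by
  have h0 : 0 < n := by omega
  set i0 : Fin n := ⟨0, h0⟩ with hi0
  have hxm : ∀ s, Measurable (x s) := fun s => measurable_fst.comp (hmeas s)
  have hym : ∀ s, Measurable (y s) := fun s => measurable_snd.comp (hmeas s)
  -- transfer of integrals to the first coordinate
  have key : ∀ (g : ℝ × ℝ → ℝ), Measurable g → ∀ s,
      ∫ ω, g (x s ω, y s ω) ∂μ = ∫ ω, g (x i0 ω, y i0 ω) ∂μ := by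
    intro g hg s
    calc ∫ ω, g (x s ω, y s ω) ∂μ
        = ∫ p, g p ∂(Measure.map (fun ω => (x s ω, y s ω)) μ) :=
          (integral_map (hmeas s).aemeasurable hg.aestronglyMeasurable).symm
      _ = ∫ p, g p ∂(Measure.map (fun ω => (x i0 ω, y i0 ω)) μ) := by
          congr 1; exact hident s
      _ = ∫ ω, g (x i0 ω, y i0 ω) ∂μ :=
          integral_map (hmeas i0).aemeasurable hg.aestronglyMeasurable
  have keyI : ∀ (g : ℝ × ℝ → ℝ), Measurable g →
      Integrable (fun ω => g (x i0 ω, y i0 ω)) μ →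
      ∀ s, Integrable (fun ω => g (x s ω, y s ω)) μ := by
    intro g hg h0i s
    have h1 : Integrable g (Measure.map (fun ω => (x i0 ω, y i0 ω)) μ) :=
      (integrable_map_measure hg.aestronglyMeasurable (hmeas i0).aemeasurable).mpr h0i
    have h2 : Integrable g (Measure.map (fun ω => (x s ω, y s ω)) μ) := by
      rw [hident s]; exact h1
    exact (integrable_map_measure hg.aestronglyMeasurable (hmeas s).aemeasurable).mp h2
  -- L² membership
  have hx2' : ∀ s, Integrable (fun ω => x s ω ^ 2) μ :=
    keyI (fun p => p.1 ^ 2) (by fun_prop) hx2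
  have hy2' : ∀ s, Integrable (fun ω => y s ω ^ 2) μ :=
    keyI (fun p => p.2 ^ 2) (by fun_prop) hy2
  have hxL2 : ∀ s, MemLp (x s) 2 μ := fun s =>
    (memLp_two_iff_integrable_sq (hxm s).aestronglyMeasurable).2 (hx2' s)
  have hyL2 : ∀ s, MemLp (y s) 2 μ := fun s =>
    (memLp_two_iff_integrable_sq (hym s).aestronglyMeasurable).2 (hy2' s)
  have hmul : ∀ s t, Integrable (fun ω => x s ω * y t ω) μ := fun s t =>
    sqIntegrable_mul (hxL2 s) (hyL2 t)
  -- the scalar constants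
  set mx := ∫ ω, x i0 ω ∂μ with hmx
  set my := ∫ ω, y i0 ω ∂μ with hmy
  set mxy := ∫ ω, x i0 ω * y i0 ω ∂μ with hmxy
  set C := mxy - mx * my with hC
  have Ix : ∀ s, ∫ ω, x s ω ∂μ = mx := fun s => key (fun p => p.1) measurable_fst s
  have Iy : ∀ s, ∫ ω, y s ω ∂μ = my := fun s => key (fun p => p.2) measurable_snd s
  have Ixy : ∀ s, ∫ ω, x s ω * y s ω ∂μ = mxy := fun s =>
    key (fun p => p.1 * p.2) (by fun_prop) s
  have Ixy' : ∀ s t, s ≠ t → ∫ ω, x s ω * y t ω ∂μ = mx * my := by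
    intro s t hst
    have hind : IndepFun (x s) (y t) μ :=
      (hindep.indepFun hst).comp measurable_fst measurable_snd
    rw [hind.integral_fun_mul_eq_mul_integral (hxm s).aestronglyMeasurable (hym t).aestronglyMeasurable,
      Ix, Iy]
  -- the two-index blocks
  have hAint : ∀ s t, Integrable (fun ω => (x s ω - x t ω) * (y s ω - y t ω)) μ := by
    intro s t
    have e : (fun ω => (x s ω - x t ω) * (y s ω - y t ω))
        = fun ω => x s ω * y s ω - x s ω * y t ω - (x t ω * y s ω - x t ω * y t ω) := by
      funext ω; ring
    rw [e]
    exact ((hmul s s).sub (hmul s t)).sub ((hmul t s).sub (hmul t t))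
  have hAval : ∀ s t, s ≠ t →
      ∫ ω, (x s ω - x t ω) * (y s ω - y t ω) ∂μ = 2 * C := by
    intro s t hst
    have e : (fun ω => (x s ω - x t ω) * (y s ω - y t ω))
        = fun ω => x s ω * y s ω - x s ω * y t ω - (x t ω * y s ω - x t ω * y t ω) := by
      funext ω; ring
    have i1 : Integrable (fun ω => x s ω * y s ω - x s ω * y t ω) μ :=
      (hmul s s).sub (hmul s t)
    have i2 : Integrable (fun ω => x t ω * y s ω - x t ω * y t ω) μ :=
      (hmul t s).sub (hmul t t)
    rw [e, integral_sub i1 i2,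
      integral_sub (hmul s s) (hmul s t), integral_sub (hmul t s) (hmul t t),
      Ixy s, Ixy t, Ixy' s t hst, Ixy' t s hst.symm, hC]
    ring
  -- product of two independent blocks
  have hterm : ∀ a b c d : Fin n, a ≠ b → a ≠ c → a ≠ d → b ≠ c → b ≠ d → c ≠ d →
      Integrable (fun ω => (1 / 4 : ℝ) * (x a ω - x b ω) * (y a ω - y b ω)
          * (x c ω - x d ω) * (y c ω - y d ω)) μ
      ∧ ∫ ω, (1 / 4 : ℝ) * (x a ω - x b ω) * (y a ω - y b ω)
          * (x c ω - x d ω) * (y c ω - y d ω) ∂μ = C ^ 2 := by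
    intro a b c d hab hac had hbc hbd hcd
    have hindAB : IndepFun (fun ω => ((x a ω, y a ω), (x b ω, y b ω)))
        (fun ω => ((x c ω, y c ω), (x d ω, y d ω))) μ :=
      hindep.indepFun_prodMk_prodMk hmeas a b c d hac had hbc hbd
    have hF : Measurable (fun q : (ℝ × ℝ) × ℝ × ℝ => (q.1.1 - q.2.1) * (q.1.2 - q.2.2)) := by
      fun_prop
    have hAB : IndepFun (fun ω => (x a ω - x b ω) * (y a ω - y b ω))
        (fun ω => (x c ω - x d ω) * (y c ω - y d ω)) μ := hindAB.comp hF hF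
    have hABint : Integrable (fun ω => ((x a ω - x b ω) * (y a ω - y b ω))
        * ((x c ω - x d ω) * (y c ω - y d ω))) μ :=
      hAB.integrable_mul (hAint a b) (hAint c d)
    have e : (fun ω => (1 / 4 : ℝ) * (x a ω - x b ω) * (y a ω - y b ω)
          * (x c ω - x d ω) * (y c ω - y d ω))
        = fun ω => (1 / 4 : ℝ) * (((x a ω - x b ω) * (y a ω - y b ω))
          * ((x c ω - x d ω) * (y c ω - y d ω))) := by
      funext ω; ring
    constructor
    · rw [e]; exact hABint.const_mul _
    · rw [e, integral_const_mul,
        hAB.integral_fun_mul_eq_mul_integral (hAint a b).aestronglyMeasurable (hAint c d).aestronglyMeasurable,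
        hAval a b hab, hAval c d hcd]
      ring
  -- the kernel
  have hker : ∀ s t u v : Fin n, s < t → t < u → u < v →
      Integrable (fun ω => hKernel (fun i => x i ω) (fun i => y i ω) s t u v) μ
      ∧ ∫ ω, hKernel (fun i => x i ω) (fun i => y i ω) s t u v ∂μ = C ^ 2 := by
    intro s t u v h1 h2 h3
    have hm : Function.Injective ![s, t, u, v] := (strictMono_vec4 h1 h2 h3).injective
    have hne : ∀ σ : Equiv.Perm (Fin 4), ∀ i j : Fin 4, i ≠ j →
        ![s, t, u, v] (σ i) ≠ ![s, t, u, v] (σ j) :=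
      fun σ i j hij => hm.ne (σ.injective.ne hij)
    have hterm' : ∀ σ : Equiv.Perm (Fin 4),
        Integrable (fun ω => (1 / 4 : ℝ)
          * (x (![s, t, u, v] (σ 0)) ω - x (![s, t, u, v] (σ 1)) ω)
          * (y (![s, t, u, v] (σ 0)) ω - y (![s, t, u, v] (σ 1)) ω)
          * (x (![s, t, u, v] (σ 2)) ω - x (![s, t, u, v] (σ 3)) ω)
          * (y (![s, t, u, v] (σ 2)) ω - y (![s, t, u, v] (σ 3)) ω)) μ
        ∧ ∫ ω, (1 / 4 : ℝ)
          * (x (![s, t, u, v] (σ 0)) ω - x (![s, t, u, v] (σ 1)) ω)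
          * (y (![s, t, u, v] (σ 0)) ω - y (![s, t, u, v] (σ 1)) ω)
          * (x (![s, t, u, v] (σ 2)) ω - x (![s, t, u, v] (σ 3)) ω)
          * (y (![s, t, u, v] (σ 2)) ω - y (![s, t, u, v] (σ 3)) ω) ∂μ = C ^ 2 :=
      fun σ => hterm _ _ _ _ (hne σ 0 1 (by decide)) (hne σ 0 2 (by decide))
        (hne σ 0 3 (by decide)) (hne σ 1 2 (by decide)) (hne σ 1 3 (by decide))
        (hne σ 2 3 (by decide))
    have hkeq : (fun ω => hKernel (fun i => x i ω) (fun i => y i ω) s t u v)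
        = fun ω => (1 / (Nat.factorial 4 : ℝ)) * ∑ σ : Equiv.Perm (Fin 4),
            (1 / 4 : ℝ)
              * (x (![s, t, u, v] (σ 0)) ω - x (![s, t, u, v] (σ 1)) ω)
              * (y (![s, t, u, v] (σ 0)) ω - y (![s, t, u, v] (σ 1)) ω)
              * (x (![s, t, u, v] (σ 2)) ω - x (![s, t, u, v] (σ 3)) ω)
              * (y (![s, t, u, v] (σ 2)) ω - y (![s, t, u, v] (σ 3)) ω) := rfl
    constructor
    · rw [hkeq]
      exact (integrable_finset_sum _ (fun σ _ => (hterm' σ).1)).const_mul _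
    · rw [hkeq, integral_const_mul, integral_finset_sum _ (fun σ _ => (hterm' σ).1),
        Finset.sum_congr rfl (fun σ _ => (hterm' σ).2), Finset.sum_const,
        Finset.card_univ, Fintype.card_perm, Fintype.card_fin, nsmul_eq_mul]
      norm_num [Nat.factorial]
      ring
  -- summand integrability and values
  have hintegrand : ∀ s t u v : Fin n, Integrable (fun ω =>
      if s < t ∧ t < u ∧ u < v then hKernel (fun i => x i ω) (fun i => y i ω) s t u v
      else 0) μ := by
    intro s t u v
    by_cases h : s < t ∧ t < u ∧ u < v
    · simp only [if_pos h]; exact (hker s t u v h.1 h.2.1 h.2.2).1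
    · simp only [if_neg h]; exact integrable_zero _ _ _
  have hintval : ∀ s t u v : Fin n, ∫ ω,
      (if s < t ∧ t < u ∧ u < v then hKernel (fun i => x i ω) (fun i => y i ω) s t u v
      else 0) ∂μ = (if s < t ∧ t < u ∧ u < v then C ^ 2 else 0) := by
    intro s t u v
    by_cases h : s < t ∧ t < u ∧ u < v
    · simp only [if_pos h]; exact (hker s t u v h.1 h.2.1 h.2.2).2
    · simp only [if_neg h]; exact integral_zero _ _
  -- assembling
  have L3 : ∀ s t u : Fin n, Integrable (fun ω => ∑ v,
      if s < t ∧ t < u ∧ u < v then hKernel (fun i => x i ω) (fun i => y i ω) s t u v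
      else 0) μ := fun s t u => integrable_finset_sum _ (fun v _ => hintegrand s t u v)
  have L2' : ∀ s t : Fin n, Integrable (fun ω => ∑ u, ∑ v,
      if s < t ∧ t < u ∧ u < v then hKernel (fun i => x i ω) (fun i => y i ω) s t u v
      else 0) μ := fun s t => integrable_finset_sum _ (fun u _ => L3 s t u)
  have L1 : ∀ s : Fin n, Integrable (fun ω => ∑ t, ∑ u, ∑ v,
      if s < t ∧ t < u ∧ u < v then hKernel (fun i => x i ω) (fun i => y i ω) s t u v
      else 0) μ := fun s => integrable_finset_sum _ (fun t _ => L2' s t)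
  have main : ∫ ω, covnSq (fun s => x s ω) (fun s => y s ω) ∂μ = C ^ 2 := by
    have e0 : (fun ω => covnSq (fun s => x s ω) (fun s => y s ω))
        = fun ω => (∑ s, ∑ t, ∑ u, ∑ v,
          if s < t ∧ t < u ∧ u < v then hKernel (fun i => x i ω) (fun i => y i ω) s t u v
          else 0) / (n.choose 4 : ℝ) := rfl
    rw [e0, integral_div, integral_finset_sum _ (fun s _ => L1 s)]
    have hsum : ∀ s : Fin n, ∫ ω, (∑ t, ∑ u, ∑ v,
        if s < t ∧ t < u ∧ u < v then hKernel (fun i => x i ω) (fun i => y i ω) s t u v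
        else 0) ∂μ = ∑ t, ∑ u, ∑ v, (if s < t ∧ t < u ∧ u < v then C ^ 2 else 0) := by
      intro s
      rw [integral_finset_sum _ (fun t _ => L2' s t)]
      refine Finset.sum_congr rfl fun t _ => ?_
      rw [integral_finset_sum _ (fun u _ => L3 s t u)]
      refine Finset.sum_congr rfl fun u _ => ?_
      rw [integral_finset_sum _ (fun v _ => hintegrand s t u v)]
      exact Finset.sum_congr rfl fun v _ => hintval s t u v
    rw [Finset.sum_congr rfl (fun s _ => hsum s)]
    have e1 : (∑ q ∈ (univ : Finset (Fin n × Fin n × Fin n × Fin n)),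
        if q.1 < q.2.1 ∧ q.2.1 < q.2.2.1 ∧ q.2.2.1 < q.2.2.2 then (C ^ 2 : ℝ) else 0)
        = ∑ s : Fin n, ∑ t, ∑ u, ∑ v,
          (if s < t ∧ t < u ∧ u < v then (C ^ 2 : ℝ) else 0) := by
      rw [← Finset.univ_product_univ, Finset.sum_product]
      refine Finset.sum_congr rfl fun s _ => ?_
      rw [← Finset.univ_product_univ, Finset.sum_product]
      refine Finset.sum_congr rfl fun t _ => ?_
      rw [← Finset.univ_product_univ, Finset.sum_product]
    rw [← e1, ← Finset.sum_filter, Finset.sum_const, card_quad, nsmul_eq_mul]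
    have hch : (n.choose 4 : ℝ) ≠ 0 :=
      Nat.cast_ne_zero.mpr (Nat.choose_pos hn).ne'
    field_simp
  exact main
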